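/- arXiv:2107.07401 — 5 statements merged into one kernel-verified Lean document; each statement's English description precedes it below -/
import Mathlib

section
/- Let M ⊆ {0, 1, …, n−1} be a union of cyclotomic cosets that contains d − 1 consecutive integers b0, b0+1, …, b0+d−2 (for some b0 and some d ≥ 2), and let C = { c(x) ∈ F_2[x] : deg c < n and c(α^j) = 0 for all j ∈ M } be the corresponding binary BCH code. Then every nonzero codeword of C has Hamming weight at least d; that is, the minimum distance of C is at least the designed distance d (BCH bound). -/
/-- **BCH bound.**  Let `n = 2^m − 1`, `α` a primitive element of `F_{2^m}`, and
`M ⊆ {0, …, n−1}` a union of cyclotomic cosets containing the `d − 1` consecutive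
integers `b0, b0+1, …, b0+d−2` (for some `d ≥ 2`).  Then every nonzero polynomial
`c ∈ F_2[x]` of degree `< n` with `c(α^j) = 0` for all `j ∈ M` has at least `d`
nonzero coefficients, i.e. the minimum distance of the BCH code is at least the
designed distance `d`. -/
theorem bch_bound (m n d b0 : ℕ) (hm : 1 ≤ m) (hn : n = 2 ^ m - 1) (hd : 2 ≤ d)
    (α : GaloisField 2 m) (hα : orderOf α = n)
    (M : Finset ℕ) (hMn : ∀ i ∈ M, i < n)
    (hM : ∀ i ∈ M, ∀ j, i * 2 ^ j % n ∈ M)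
    (hconsec : ∀ t < d - 1, b0 + t ∈ M)
    (c : Polynomial (ZMod 2)) (hcdeg : c.degree < (n : ℕ))
    (hcroot : ∀ j ∈ M, Polynomial.aeval (α ^ j) c = 0)
    (hc0 : c ≠ 0) :
    d ≤ c.support.card := by
  by_contra hlt
  push_neg at hlt
  have hn1 : 1 ≤ n := by
    have h2 : 2 ≤ 2 ^ m := by
      calc 2 = 2 ^ 1 := (pow_one 2).symm
      _ ≤ 2 ^ m := Nat.pow_le_pow_right (by norm_num) hm
    omega
  have hα0 : α ≠ 0 := by
    intro h
    have h1 : α ^ n = 1 := by rw [← hα]; exact pow_orderOf_eq_one α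
    rw [h, zero_pow (by omega)] at h1
    exact zero_ne_one h1
  -- injectivity of powers of α below n
  have key : ∀ i j : ℕ, i ≤ j → j < n → α ^ i = α ^ j → i = j := by
    intro i j hij hjn h
    have h2 : α ^ i * α ^ (j - i) = α ^ i * 1 := by
      rw [mul_one, ← pow_add]
      rw [h]; congr 1; omega
    have h3 : α ^ (j - i) = 1 := mul_left_cancel₀ (pow_ne_zero _ hα0) h2
    have h4 := orderOf_dvd_of_pow_eq_one h3
    rw [hα] at h4
    have h5 := Nat.eq_zero_of_dvd_of_lt h4 (by omega)
    omega
  have hinj : ∀ i j : ℕ, i < n → j < n → α ^ i = α ^ j → i = j := by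
    intro i j hi hj h
    rcases le_total i j with hle | hle
    · exact key i j hle hj h
    · exact (key j i hle hi h.symm).symm
  -- enumerate the support
  set w := c.support.card with hw
  have hndeg : c.natDegree < n := by
    rwa [Polynomial.natDegree_lt_iff_degree_lt hc0]
  let e : c.support ≃ Fin w := c.support.equivFin
  let ι : Fin w → ℕ := fun k => ((e.symm k : c.support) : ℕ)
  have hιmem : ∀ k, ι k ∈ c.support := fun k => (e.symm k).2
  have hιlt : ∀ k, ι k < n := fun k =>
    lt_of_le_of_lt (Polynomial.le_natDegree_of_mem_supp _ (hιmem k)) hndeg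
  have hιinj : Function.Injective ι := by
    intro k l h
    have : (e.symm k : c.support) = e.symm l := Subtype.ext h
    exact e.symm.injective this
  let v : Fin w → GaloisField 2 m := fun k => α ^ ι k
  have hvinj : Function.Injective v := fun k l h =>
    hιinj (hinj _ _ (hιlt k) (hιlt l) h)
  let a : Fin w → GaloisField 2 m := fun k => α ^ (b0 * ι k)
  -- the key system of equations
  have hsum : ∀ t : Fin w, (∑ k : Fin w, a k * v k ^ (t : ℕ)) = 0 := by
    intro t
    have htd : b0 + (t : ℕ) ∈ M := hconsec _ (by omega)
    have h0 := hcroot _ htd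
    have hcoeff1 : ∀ i ∈ c.support,
        (algebraMap (ZMod 2) (GaloisField 2 m)) (c.coeff i) = 1 := by
      intro i hi
      have hne : c.coeff i ≠ 0 := Polynomial.mem_support_iff.mp hi
      have : c.coeff i = 1 := by
        revert hne
        generalize c.coeff i = x
        revert x; decide
      rw [this, map_one]
    have heval : Polynomial.aeval (α ^ (b0 + (t : ℕ))) c =
        ∑ i ∈ c.support, (α ^ (b0 + (t : ℕ))) ^ i := by
      rw [Polynomial.aeval_def, Polynomial.eval₂_eq_sum, Polynomial.sum_def]
      exact Finset.sum_congr rfl fun i hi => by rw [hcoeff1 i hi, one_mul]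
    rw [heval] at h0
    rw [← h0]
    have hterm : ∀ k : Fin w,
        a k * v k ^ (t : ℕ) = (α ^ (b0 + (t : ℕ))) ^ (ι k) := by
      intro k
      show α ^ (b0 * ι k) * (α ^ ι k) ^ (t : ℕ) = _
      rw [← pow_mul, ← pow_add, ← pow_mul]
      congr 1; ring
    calc (∑ k : Fin w, a k * v k ^ (t : ℕ))
        = ∑ k : Fin w, (α ^ (b0 + (t : ℕ))) ^ (ι k) :=
          Finset.sum_congr rfl fun k _ => hterm k
      _ = ∑ s : c.support, (α ^ (b0 + (t : ℕ))) ^ (s : ℕ) :=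
          Fintype.sum_equiv e.symm (fun k => (α ^ (b0 + (t : ℕ))) ^ (ι k))
            (fun s => (α ^ (b0 + (t : ℕ))) ^ (s : ℕ)) (fun k => rfl) |>.symm ▸ rfl
      _ = ∑ i ∈ c.support, (α ^ (b0 + (t : ℕ))) ^ i := by
          rw [← Finset.sum_coe_sort c.support]
  have ha0 : a = 0 :=
    Matrix.eq_zero_of_forall_pow_sum_mul_pow_eq_zero hvinj hsum
  -- but a is nowhere zero, and w ≥ 1
  have hw1 : 0 < w := Finset.card_pos.mpr (Polynomial.support_nonempty.mpr hc0)
  have : a ⟨0, hw1⟩ = 0 := by rw [ha0]; rfl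
  exact pow_ne_zero _ hα0 this
end

section
/- Fix b(x) ∈ F_2[x] of degree less than n with exactly δ nonzero coefficients, and fix 0 ≤ τ ≤ n. For a subset E ⊆ {0, …, n−1} with |E| = τ, let e_E(x) = ∑_{s ∈ E} x^s and w_E(x) = e_E(x)·b(x) mod (x^n − 1). Then the sum of the Hamming weights of w_E over all τ-subsets E equals n·W, where W = ∑_{j odd, 0 ≤ j ≤ min(δ,τ)} C(δ, j)·C(n−δ, τ−j) (binomial coefficients). Equivalently, the expected Hamming weight of w_E for a uniformly random weight-τ error is E[ω] = n·W / C(n, τ). -/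
open Polynomial

open Finset in
private lemma modlem {R : Type*} [CommRing R] [Nontrivial R] {n : ℕ} (hn : 1 ≤ n)
    (p : R[X]) (hp : p.degree < (2 * n : ℕ)) {k : ℕ} (hk : k < n) :
    (p %ₘ (X ^ n - 1)).coeff k = p.coeff k + p.coeff (n + k) := by
  have hmonic : (X ^ n - 1 : R[X]).Monic := by
    simpa using monic_X_pow_sub_C (1 : R) (by omega)
  have hdeg : (X ^ n - 1 : R[X]).degree = n := by
    simpa using degree_X_pow_sub_C (by omega : 0 < n) (1 : R)
  set r : R[X] := ∑ i ∈ range n, monomial i (p.coeff i + p.coeff (n + i)) with hr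
  set q : R[X] := ∑ i ∈ range n, monomial i (p.coeff (n + i)) with hq
  have hrc : ∀ m, r.coeff m = if m < n then p.coeff m + p.coeff (n + m) else 0 := by
    intro m
    rw [hr, finset_sum_coeff]
    simp only [coeff_monomial]
    rw [Finset.sum_ite_eq' (range n) m]
    simp [Finset.mem_range]
  have hqc : ∀ m, q.coeff m = if m < n then p.coeff (n + m) else 0 := by
    intro m
    rw [hq, finset_sum_coeff]
    simp only [coeff_monomial]
    rw [Finset.sum_ite_eq' (range n) m]
    simp [Finset.mem_range]
  have hrdeg : r.degree < (X ^ n - 1 : R[X]).degree := by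
    rw [hdeg]
    apply lt_of_le_of_lt (degree_sum_le _ _)
    rw [Finset.sup_lt_iff (by exact_mod_cast WithBot.bot_lt_coe n)]
    intro i hi
    exact lt_of_le_of_lt (degree_monomial_le _ _)
      (by exact_mod_cast Finset.mem_range.mp hi)
  have key : r + (X ^ n - 1) * q = p := by
    ext m
    have hm : ((X ^ n - 1 : R[X]) * q).coeff m = (q * X ^ n).coeff m - q.coeff m := by
      rw [mul_comm, mul_sub, mul_one]
      simp [sub_eq_add_neg]
    rw [coeff_add, hm, coeff_mul_X_pow']
    simp only [hrc, hqc]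
    by_cases h1 : m < n
    · rw [if_pos h1, if_neg (by omega), if_pos h1]; ring
    · by_cases h2 : m < 2*n
      · rw [if_neg h1, if_pos (by omega), if_pos (by omega), if_neg h1]
        have e : n + (m - n) = m := by omega
        rw [e]; ring
      · rw [if_neg h1, if_pos (by omega), if_neg (by omega), if_neg h1]
        rw [coeff_eq_zero_of_degree_lt
          (lt_of_lt_of_le hp (by exact_mod_cast (by omega : 2*n ≤ m)))]
        ring
  have := (div_modByMonic_unique q r hmonic ⟨key, hrdeg⟩).2
  rw [this, hrc, if_pos hk]

private lemma invlem {n k t : ℕ} (hk : k < n) (ht : t < n) :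
    (n + k - (n + k - t) % n) % n = t := by
  rcases le_or_gt t k with h | h
  · have e1 : n + k - t = n + (k - t) := by omega
    rw [e1, Nat.add_mod_left, Nat.mod_eq_of_lt (by omega : k - t < n)]
    have e2 : n + k - (k - t) = n + t := by omega
    rw [e2, Nat.add_mod_left, Nat.mod_eq_of_lt ht]
  · rw [Nat.mod_eq_of_lt (by omega : n + k - t < n)]
    have e : n + k - (n + k - t) = t := by omega
    rw [e, Nat.mod_eq_of_lt ht]

open Finset in
private lemma countlem (n δ τ j : ℕ) (S : Finset ℕ) (hS : S ⊆ Finset.range n)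
    (hcard : S.card = δ) (hj : j ≤ τ) :
    (((Finset.range n).powersetCard τ).filter (fun E => (E ∩ S).card = j)).card
      = δ.choose j * (n - δ).choose (τ - j) := by
  have hTcard : ((Finset.range n) \ S).card = n - δ := by
    rw [card_sdiff_of_subset hS, card_range, hcard]
  rw [← hTcard, ← hcard, ← card_powersetCard, ← card_powersetCard, ← card_product]
  apply Finset.card_bij' (fun E _ => (E ∩ S, E \ S)) (fun P _ => P.1 ∪ P.2)
  · intro E hE
    simp only [mem_filter, mem_powersetCard] at hE
    obtain ⟨⟨hEsub, hEcard⟩, hEj⟩ := hE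
    simp only [mem_product, mem_powersetCard]
    refine ⟨⟨inter_subset_right, hEj⟩, sdiff_subset_sdiff hEsub Subset.rfl, ?_⟩
    have := card_inter_add_card_sdiff E S
    omega
  · intro P hP
    simp only [mem_product, mem_powersetCard] at hP
    obtain ⟨⟨hA, hAc⟩, hB, hBc⟩ := hP
    have hdisj : Disjoint P.1 P.2 :=
      Finset.disjoint_of_subset_left hA (Finset.disjoint_of_subset_right hB disjoint_sdiff)
    simp only [mem_filter, mem_powersetCard]
    have hBS : Disjoint P.2 S := Finset.disjoint_of_subset_left hB sdiff_disjoint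
    constructor
    · constructor
      · exact union_subset (hA.trans hS) (hB.trans sdiff_subset)
      · rw [card_union_of_disjoint hdisj, hAc, hBc]; omega
    · rw [union_inter_distrib_right, inter_eq_left.mpr hA,
        Finset.disjoint_iff_inter_eq_empty.mp hBS, union_empty, hAc]
  · intro E hE
    exact sup_inf_sdiff E S
  · intro P hP
    simp only [mem_product, mem_powersetCard] at hP
    obtain ⟨⟨hA, hAc⟩, hB, hBc⟩ := hP
    have hBS : Disjoint P.2 S := Finset.disjoint_of_subset_left hB sdiff_disjoint
    have h1 : (P.1 ∪ P.2) ∩ S = P.1 := by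
      rw [union_inter_distrib_right, inter_eq_left.mpr hA,
        Finset.disjoint_iff_inter_eq_empty.mp hBS, union_empty]
    have h2 : (P.1 ∪ P.2) \ S = P.2 := by
      rw [union_sdiff_distrib, sdiff_eq_empty_iff_subset.mpr hA,
        Finset.sdiff_eq_self_iff_disjoint.mpr hBS, empty_union]
    rw [h1, h2]

private lemma paritylem (v : ℕ → ZMod 2) (E : Finset ℕ) :
    (∑ s ∈ E, v s ≠ 0) ↔ Odd ((E.filter (fun s => v s ≠ 0)).card) := by
  classical
  rw [← Finset.sum_filter_ne_zero]
  have h1 : ∑ s ∈ E.filter (fun s => v s ≠ 0), v s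
      = ((E.filter (fun s => v s ≠ 0)).card : ZMod 2) := by
    rw [Finset.sum_congr rfl (fun s hs => ?_), Finset.sum_const, nsmul_eq_mul, mul_one]
    have h := (Finset.mem_filter.mp hs).2
    revert h; generalize v s = x; revert x; decide
  rw [h1, Ne, ZMod.natCast_eq_zero_iff, Nat.odd_iff, Nat.two_dvd_ne_zero]

open Finset in
private lemma oddcount (n δ τ : ℕ) (S : Finset ℕ) (hS : S ⊆ Finset.range n)
    (hcard : S.card = δ) :
    (((Finset.range n).powersetCard τ).filter (fun E => Odd ((E ∩ S).card))).card
      = ∑ j ∈ (Finset.range (min δ τ + 1)).filter (fun j => Odd j),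
          δ.choose j * (n - δ).choose (τ - j) := by
  classical
  rw [Finset.card_eq_sum_card_fiberwise (f := fun E => (E ∩ S).card)
      (t := (Finset.range (min δ τ + 1)).filter (fun j => Odd j)) ?_]
  · apply Finset.sum_congr rfl
    intro j hj
    simp only [Finset.mem_filter, Finset.mem_range] at hj
    rw [Finset.filter_filter]
    rw [← countlem n δ τ j S hS hcard (by omega)]
    congr 1
    apply Finset.filter_congr
    intro E _
    constructor
    · exact fun h => h.2
    · exact fun h => ⟨h ▸ hj.2, h⟩
  · intro E hE
    simp only [Finset.mem_coe, Finset.mem_filter, Finset.mem_powersetCard] at hE ⊢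
    refine ⟨Finset.mem_range.mpr ?_, hE.2⟩
    have h1 : (E ∩ S).card ≤ S.card := Finset.card_le_card Finset.inter_subset_right
    have h2 : (E ∩ S).card ≤ E.card := Finset.card_le_card Finset.inter_subset_left
    omega

private lemma coefflem (n : ℕ) (hn : 1 ≤ n) (b : Polynomial (ZMod 2))
    (hbdeg : b.degree < (n : ℕ))
    (E : Finset ℕ) (hE : E ⊆ Finset.range n) {k : ℕ} (hk : k < n) :
    (((∑ s ∈ E, (X : Polynomial (ZMod 2)) ^ s) * b) %ₘ (X ^ n - 1)).coeff k
      = ∑ s ∈ E, b.coeff ((n + k - s) % n) := by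
  have h1 : (∑ s ∈ E, (X : Polynomial (ZMod 2)) ^ s).degree ≤ ((n - 1 : ℕ) : WithBot ℕ) := by
    apply le_trans (degree_sum_le _ _)
    rw [Finset.sup_le_iff]
    intro s hs
    rw [degree_X_pow]
    exact_mod_cast (by have := Finset.mem_range.mp (hE hs); omega : s ≤ n - 1)
  have h2 : b.degree ≤ ((n - 1 : ℕ) : WithBot ℕ) := by
    rcases hd : b.degree with _ | d
    · exact bot_le
    · rw [hd] at hbdeg
      rw [WithBot.some_eq_coe] at hbdeg ⊢
      rw [Nat.cast_withBot] at hbdeg ⊢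
      have hdn : d < n := WithBot.coe_lt_coe.mp hbdeg
      exact WithBot.coe_le_coe.mpr (by omega)
  have hdeg2 : ((∑ s ∈ E, (X : Polynomial (ZMod 2)) ^ s) * b).degree
      < ((2 * n : ℕ) : WithBot ℕ) := by
    apply lt_of_le_of_lt (degree_mul_le _ _)
    apply lt_of_le_of_lt (add_le_add h1 h2)
    rw [← Nat.cast_add]
    exact_mod_cast (by omega : n - 1 + (n - 1) < 2 * n)
  have hco : ∀ m, ((∑ s ∈ E, (X : Polynomial (ZMod 2)) ^ s) * b).coeff m
      = ∑ s ∈ E, (if s ≤ m then b.coeff (m - s) else 0) := by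
    intro m
    rw [Finset.sum_mul, finset_sum_coeff]
    exact Finset.sum_congr rfl fun s _ => by rw [mul_comm, coeff_mul_X_pow']
  have key : ∀ s < n, (if s ≤ k then b.coeff (k - s) else 0)
      + (if s ≤ n + k then b.coeff (n + k - s) else 0) = b.coeff ((n + k - s) % n) := by
    intro s hsn
    rw [if_pos (by omega : s ≤ n + k)]
    rcases le_or_gt s k with h | h
    · rw [if_pos h]
      have hz : b.coeff (n + (k - s)) = 0 := coeff_eq_zero_of_degree_lt
        (lt_of_lt_of_le hbdeg (by exact_mod_cast Nat.le_add_right n (k - s)))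
      have e1 : n + k - s = n + (k - s) := by omega
      rw [e1, Nat.add_mod_left, Nat.mod_eq_of_lt (by omega : k - s < n), hz, add_zero]
    · rw [if_neg (by omega), Nat.mod_eq_of_lt (by omega : n + k - s < n), zero_add]
  rw [modlem hn _ hdeg2 hk, hco k, hco (n + k), ← Finset.sum_add_distrib]
  exact Finset.sum_congr rfl fun s hs => key s (Finset.mem_range.mp (hE hs))

private lemma scard (n k : ℕ) (hk : k < n) (b : Polynomial (ZMod 2))
    (hbdeg : b.degree < (n : ℕ)) :
    ((Finset.range n).filter (fun s => b.coeff ((n + k - s) % n) ≠ 0)).card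
      = b.support.card := by
  apply Finset.card_bij (fun s _ => (n + k - s) % n)
  · intro s hs
    exact Polynomial.mem_support_iff.mpr (Finset.mem_filter.mp hs).2
  · intro s1 h1 s2 h2 he
    have e1 := invlem hk (Finset.mem_range.mp (Finset.mem_filter.mp h1).1)
    have e2 := invlem hk (Finset.mem_range.mp (Finset.mem_filter.mp h2).1)
    rw [← e1, ← e2, he]
  · intro t ht
    have htn : t < n := by
      have := Polynomial.le_degree_of_ne_zero (Polynomial.mem_support_iff.mp ht)
      exact_mod_cast lt_of_le_of_lt this hbdeg
    refine ⟨(n + k - t) % n, Finset.mem_filter.mpr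
      ⟨Finset.mem_range.mpr (Nat.mod_lt _ (by omega)), ?_⟩, invlem hk htn⟩
    rw [invlem hk htn]
    exact Polynomial.mem_support_iff.mp ht

/-- Fix `b ∈ F_2[x]` of degree `< n` with exactly `δ` nonzero coefficients and
`0 ≤ τ ≤ n`.  For a `τ`-subset `E ⊆ {0,…,n−1}` let `e_E = ∑_{s∈E} x^s` and
`w_E = e_E·b mod (x^n − 1)`.  Then the sum of the Hamming weights of the `w_E`
over all `τ`-subsets `E` equals `n·W` where
`W = ∑_{j odd, 0 ≤ j ≤ min(δ,τ)} C(δ,j)·C(n−δ,τ−j)`; equivalently, the expected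
weight of `w_E` for a uniformly random weight-`τ` error is `n·W / C(n,τ)`. -/
theorem expected_weight_of_error_times_dual (n δ τ : ℕ) (hn : 1 ≤ n)
    (b : Polynomial (ZMod 2)) (hbdeg : b.degree < (n : ℕ))
    (hbwt : b.support.card = δ) (hτ : τ ≤ n) :
    ∑ E ∈ (Finset.range n).powersetCard τ,
        (((∑ s ∈ E, (X : Polynomial (ZMod 2)) ^ s) * b) %ₘ (X ^ n - 1)).support.card
      = n * ∑ j ∈ (Finset.range (min δ τ + 1)).filter (fun j => Odd j),
          δ.choose j * (n - δ).choose (τ - j) := by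
  classical
  have hmonic : (X ^ n - 1 : Polynomial (ZMod 2)).Monic := by
    simpa using monic_X_pow_sub_C (1 : ZMod 2) (by omega)
  have hdeg : (X ^ n - 1 : Polynomial (ZMod 2)).degree = n := by
    simpa using degree_X_pow_sub_C (by omega : 0 < n) (1 : ZMod 2)
  have step1 : ∀ E ∈ (Finset.range n).powersetCard τ,
      (((∑ s ∈ E, (X : Polynomial (ZMod 2)) ^ s) * b) %ₘ (X ^ n - 1)).support.card
      = ((Finset.range n).filter (fun k => Odd ((E ∩
          ((Finset.range n).filter (fun s => b.coeff ((n + k - s) % n) ≠ 0))).card))).card := by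
    intro E hE
    rw [Finset.mem_powersetCard] at hE
    set w := ((∑ s ∈ E, (X : Polynomial (ZMod 2)) ^ s) * b) %ₘ (X ^ n - 1) with hw
    have hsupp : w.support = (Finset.range n).filter (fun k => w.coeff k ≠ 0) := by
      ext m
      simp only [Polynomial.mem_support_iff, Finset.mem_filter, Finset.mem_range]
      constructor
      · intro h
        refine ⟨?_, h⟩
        have hlt : w.degree < ((n : ℕ) : WithBot ℕ) := by
          rw [← hdeg]; exact degree_modByMonic_lt _ hmonic
        have := Polynomial.le_degree_of_ne_zero h
        exact_mod_cast lt_of_le_of_lt this hlt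
      · exact fun h => h.2
    rw [hsupp]
    congr 1
    apply Finset.filter_congr
    intro k hk
    rw [Finset.mem_range] at hk
    rw [hw, coefflem n hn b hbdeg E hE.1 hk, paritylem]
    have heq : E.filter (fun s => b.coeff ((n + k - s) % n) ≠ 0)
        = E ∩ ((Finset.range n).filter (fun s => b.coeff ((n + k - s) % n) ≠ 0)) := by
      ext s
      simp only [Finset.mem_filter, Finset.mem_inter, Finset.mem_range]
      constructor
      · intro h
        exact ⟨h.1, Finset.mem_range.mp (hE.1 h.1), h.2⟩
      · tauto
    rw [heq]
  rw [Finset.sum_congr rfl step1]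
  have swap : ∑ E ∈ (Finset.range n).powersetCard τ,
      ((Finset.range n).filter (fun k => Odd ((E ∩
          ((Finset.range n).filter (fun s => b.coeff ((n + k - s) % n) ≠ 0))).card))).card
      = ∑ k ∈ Finset.range n,
        (((Finset.range n).powersetCard τ).filter (fun E => Odd ((E ∩
          ((Finset.range n).filter (fun s => b.coeff ((n + k - s) % n) ≠ 0))).card))).card := by
    simp_rw [Finset.card_filter]
    rw [Finset.sum_comm]
  rw [swap]
  rw [Finset.sum_congr rfl (fun k hk => oddcount n δ τ _ (Finset.filter_subset _ _)
    (by rw [scard n k (Finset.mem_range.mp hk) b hbdeg, hbwt]))]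
  rw [Finset.sum_const, Finset.card_range, smul_eq_mul]
end

section
/- Let n = 2^m − 1 and let α be a primitive element of F_{2^m}. For x ∈ F_{2^m}, let coords(x) ∈ F_2^m denote the coordinates of x with respect to the basis (1, α, …, α^{m−1}). Define R(r,m)* = { ( f(coords(α^0)), f(coords(α^1)), …, f(coords(α^{n−1})) ) : f a multilinear polynomial over F_2 in m variables of degree ≤ r } ⊆ F_2^n. Then R(r,m)* is a cyclic code: it is invariant under the cyclic shift (c_0, c_1, …, c_{n−1}) ↦ (c_{n−1}, c_0, …, c_{n−2}). -/
/-- A multilinear (Boolean) polynomial: every variable occurs with exponent at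
most one in every monomial. -/
def IsMultilinear {m : ℕ} (f : MvPolynomial (Fin m) (ZMod 2)) : Prop :=
  ∀ s ∈ f.support, ∀ i, s i ≤ 1

namespace RMaux

open MvPolynomial

/-- cap exponents at 1 -/
noncomputable def mlin {m : ℕ} (s : Fin m →₀ ℕ) : Fin m →₀ ℕ :=
  s.mapRange (fun e => min e 1) (by simp)

@[simp] lemma mlin_apply {m : ℕ} (s : Fin m →₀ ℕ) (i : Fin m) :
    mlin s i = min (s i) 1 := rfl

/-- multilinear reduction -/
noncomputable def mreduce {m : ℕ} (p : MvPolynomial (Fin m) (ZMod 2)) :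
    MvPolynomial (Fin m) (ZMod 2) :=
  ∑ s ∈ p.support, monomial (mlin s) (p.coeff s)

lemma mem_support_mreduce {m : ℕ} {p : MvPolynomial (Fin m) (ZMod 2)}
    {t : Fin m →₀ ℕ} (ht : t ∈ (mreduce p).support) :
    ∃ s ∈ p.support, t = mlin s := by
  have h : (mreduce p).coeff t ≠ 0 := mem_support_iff.mp ht
  rw [mreduce] at h
  rw [coeff_sum] at h
  obtain ⟨s, hs, hne⟩ := Finset.exists_ne_zero_of_sum_ne_zero h
  refine ⟨s, hs, ?_⟩
  by_contra hts
  rw [coeff_monomial, if_neg (fun h' => hts h'.symm)] at hne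
  exact hne rfl

lemma mreduce_multilinear {m : ℕ} (p : MvPolynomial (Fin m) (ZMod 2)) :
    IsMultilinear (mreduce p) := by
  intro t ht i
  obtain ⟨s, _, rfl⟩ := mem_support_mreduce ht
  simp

lemma mreduce_totalDegree {m : ℕ} (p : MvPolynomial (Fin m) (ZMod 2)) :
    (mreduce p).totalDegree ≤ p.totalDegree := by
  apply Finset.sup_le
  intro t ht
  obtain ⟨s, hs, rfl⟩ := mem_support_mreduce ht
  calc (mlin s).sum (fun _ e => e) = s.sum fun _ e => min e 1 :=
        Finsupp.sum_mapRange_index (fun _ => rfl)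
    _ ≤ s.sum fun _ e => e := Finset.sum_le_sum (fun i _ => min_le_left _ _)
    _ ≤ p.totalDegree := le_totalDegree hs

lemma zmod2_pow_min (a : ZMod 2) (e : ℕ) : a ^ min e 1 = a ^ e := by
  rcases Nat.eq_zero_or_pos e with he | he
  · subst he; rfl
  · have h2 : ∀ b : ZMod 2, b = 0 ∨ b = 1 := by decide
    rw [min_eq_right he]
    rcases h2 a with rfl | rfl
    · simp [zero_pow he.ne']
    · simp

lemma eval_mreduce {m : ℕ} (p : MvPolynomial (Fin m) (ZMod 2))
    (x : Fin m → ZMod 2) : eval x (mreduce p) = eval x p := by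
  rw [mreduce, map_sum, eval_eq']
  apply Finset.sum_congr rfl
  intro s hs
  rw [eval_monomial, Finsupp.prod_pow]
  congr 1
  apply Finset.prod_congr rfl
  intro i _
  exact zmod2_pow_min _ _

lemma totalDegree_bind₁_le {m : ℕ} (g : Fin m → MvPolynomial (Fin m) (ZMod 2))
    (hg : ∀ j, (g j).totalDegree ≤ 1) (f : MvPolynomial (Fin m) (ZMod 2)) :
    (bind₁ g f).totalDegree ≤ f.totalDegree := by
  rw [bind₁, aeval_def, eval₂_eq]
  apply (totalDegree_finset_sum _ _).trans
  apply Finset.sup_le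
  intro s hs
  calc (algebraMap (ZMod 2) _ (f.coeff s) * ∏ i ∈ s.support, g i ^ s i).totalDegree
      ≤ (algebraMap (ZMod 2) (MvPolynomial (Fin m) (ZMod 2)) (f.coeff s)).totalDegree
        + (∏ i ∈ s.support, g i ^ s i).totalDegree := totalDegree_mul _ _
    _ ≤ 0 + (∏ i ∈ s.support, g i ^ s i).totalDegree := by
        gcongr
        exact le_of_eq (totalDegree_C _)
    _ = (∏ i ∈ s.support, g i ^ s i).totalDegree := by rw [zero_add]
    _ ≤ ∑ i ∈ s.support, (g i ^ s i).totalDegree := totalDegree_finset_prod _ _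
    _ ≤ ∑ i ∈ s.support, s i * 1 := by
        apply Finset.sum_le_sum
        intro i _
        exact (totalDegree_pow _ _).trans (by gcongr; exact hg i)
    _ = ∑ i ∈ s.support, s i := by simp
    _ ≤ f.totalDegree := le_totalDegree hs

end RMaux

open MvPolynomial RMaux

/-- The reordered punctured Reed-Muller code
`R(r,m)* = { (f(coords α^0), …, f(coords α^{n−1})) : f multilinear of degree ≤ r }`
is cyclic: it is invariant under the cyclic shift
`(c_0, …, c_{n−1}) ↦ (c_{n−1}, c_0, …, c_{n−2})` (position `i` of the shifted
word is `c_{i−1 mod n}`). -/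
theorem punctured_RM_is_cyclic (m r n : ℕ) (hm : 1 ≤ m) (hr : r ≤ m)
    (hn : n = 2 ^ m - 1) [NeZero n]
    (α : GaloisField 2 m) (hα : orderOf α = n)
    (coords : GaloisField 2 m → Fin m → ZMod 2)
    (hcoords : ∀ x : GaloisField 2 m,
      ∑ i : Fin m, algebraMap (ZMod 2) (GaloisField 2 m) (coords x i) * α ^ (i : ℕ) = x)
    (c : Fin n → ZMod 2)
    (hc : ∃ f : MvPolynomial (Fin m) (ZMod 2), IsMultilinear f ∧
      f.totalDegree ≤ r ∧
      ∀ i : Fin n, c i = MvPolynomial.eval (coords (α ^ (i : ℕ))) f) :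
    ∃ ftil : MvPolynomial (Fin m) (ZMod 2), IsMultilinear ftil ∧
      ftil.totalDegree ≤ r ∧
      ∀ i : Fin n, c (i - 1) = MvPolynomial.eval (coords (α ^ (i : ℕ))) ftil := by
  obtain ⟨f, hfml, hfdeg, hfeval⟩ := hc
  haveI : Fact (Nat.Prime 2) := ⟨Nat.prime_two⟩
  -- the linear map φ : (Fin m → ZMod 2) → GaloisField 2 m
  set φ : (Fin m → ZMod 2) →ₗ[ZMod 2] GaloisField 2 m :=
    { toFun := fun v => ∑ i : Fin m, algebraMap (ZMod 2) (GaloisField 2 m) (v i) * α ^ (i : ℕ)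
      map_add' := by
        intro v w
        simp [map_add, add_mul, Finset.sum_add_distrib]
      map_smul' := by
        intro a v
        simp only [Pi.smul_apply, smul_eq_mul, map_mul, RingHom.id_apply, Finset.smul_sum,
          Algebra.smul_def, mul_assoc]
        rw [Finset.mul_sum] } with hφdef
  have hφ : ∀ x, φ (coords x) = x := hcoords
  have hsurj : Function.Surjective φ := fun x => ⟨coords x, hφ x⟩
  have hrank : Module.finrank (ZMod 2) (Fin m → ZMod 2)
      = Module.finrank (ZMod 2) (GaloisField 2 m) := by
    rw [Module.finrank_pi, Fintype.card_fin, GaloisField.finrank 2 (by omega)]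
  have hinj : Function.Injective φ :=
    (LinearMap.injective_iff_surjective_of_finrank_eq_finrank hrank).mpr hsurj
  have hcl : ∀ x, coords x = (LinearEquiv.ofBijective φ ⟨hinj, hsurj⟩).symm x := by
    intro x
    apply hinj
    rw [hφ]
    exact (LinearEquiv.apply_symm_apply (LinearEquiv.ofBijective φ ⟨hinj, hsurj⟩) x).symm
  set e := LinearEquiv.ofBijective φ ⟨hinj, hsurj⟩ with he
  -- the substitution
  set g : Fin m → MvPolynomial (Fin m) (ZMod 2) :=
    fun j => ∑ k : Fin m, C (coords (α ^ (n - 1 + (k : ℕ))) j) * X k with hg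
  have hgdeg : ∀ j, (g j).totalDegree ≤ 1 := by
    intro j
    apply (totalDegree_finset_sum _ _).trans
    apply Finset.sup_le
    intro k _
    apply (totalDegree_mul _ _).trans
    simp [totalDegree_C, totalDegree_X]
  refine ⟨mreduce (bind₁ g f), mreduce_multilinear _, ?_, ?_⟩
  · exact (mreduce_totalDegree _).trans ((totalDegree_bind₁_le g hgdeg f).trans hfdeg)
  · intro i
    -- key evaluation identity
    have key : ∀ x : GaloisField 2 m,
        eval (coords x) (bind₁ g f) = eval (coords (α ^ (n - 1) * x)) f := by
      intro x
      have hb : eval (coords x) (bind₁ g f)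
          = eval (fun j => eval (coords x) (g j)) f := eval₂Hom_bind₁ _ _ _ _
      have harg : (fun j => eval (coords x) (g j)) = coords (α ^ (n - 1) * x) := by
        funext j
        rw [hg]
        simp only [map_sum, map_mul, eval_C, eval_X]
        have hx : α ^ (n - 1) * x = ∑ k : Fin m, coords x k • α ^ (n - 1 + (k : ℕ)) := by
          conv_lhs => rw [← hφ x]
          rw [hφdef]
          simp only [LinearMap.coe_mk, AddHom.coe_mk, Finset.mul_sum]
          apply Finset.sum_congr rfl
          intro k _
          rw [Algebra.smul_def, pow_add]
          ring
        rw [hx]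
        conv_rhs => rw [hcl]
        rw [map_sum, Finset.sum_apply]
        refine Finset.sum_congr rfl fun k _ => ?_
        rw [map_smul, ← hcl]
        simp [mul_comm, smul_eq_mul]
      rw [hb, harg]
    rw [eval_mreduce, key]
    -- now show c (i - 1) = eval (coords (α ^ (n-1) * α ^ i)) f
    have hmod : ((i - 1 : Fin n) : ℕ) ≡ n - 1 + (i : ℕ) [MOD n] := by
      have hi : ((i - 1 : Fin n) : ℕ) = (n - ((1 : Fin n) : ℕ) + (i : ℕ)) % n := by
        rw [Fin.sub_def]
      rcases eq_or_lt_of_le (Nat.one_le_iff_ne_zero.mpr (NeZero.ne n)) with h1 | h1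
      · -- n = 1
        have hn1 : n = 1 := h1.symm
        subst hn1
        simp [Nat.ModEq]
      · have h1n : ((1 : Fin n) : ℕ) = 1 := by
          rw [Fin.val_one' n, Nat.mod_eq_of_lt h1]
        rw [hi, h1n]
        exact Nat.mod_modEq _ _
    have hpow : α ^ ((i - 1 : Fin n) : ℕ) = α ^ (n - 1 + (i : ℕ)) := by
      have hmod' : ((i - 1 : Fin n) : ℕ) % n = (n - 1 + (i : ℕ)) % n := hmod
      have hper : ∀ a : ℕ, α ^ (a % n) = α ^ a := by
        intro a
        conv_lhs => rw [← hα]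
        exact pow_mod_orderOf α a
      calc α ^ ((i - 1 : Fin n) : ℕ) = α ^ (((i - 1 : Fin n) : ℕ) % n) := (hper _).symm
        _ = α ^ ((n - 1 + (i : ℕ)) % n) := by rw [hmod']
        _ = α ^ (n - 1 + (i : ℕ)) := hper _
    rw [hfeval (i - 1), hpow, pow_add]
end

section
/- Let n = 2^m − 1, let α be a primitive element of F_{2^m}, and let 0 ≤ r ≤ m−1. For x ∈ F_{2^m}, let coords(x) ∈ F_2^m denote the coordinates of x with respect to the basis (1, α, …, α^{m−1}). Then for every multilinear polynomial f over F_2 in m variables of degree ≤ r, and every integer h with 1 ≤ wt₂(h) ≤ m − r − 1 (where wt₂(h) is the number of ones in the binary expansion of h), one has ∑_{i=0}^{n−1} ι( f(coords(α^i)) ) · α^{h·i} = 0 in F_{2^m}, where ι : F_2 → F_{2^m} is the canonical embedding. Equivalently, α^h is a root of every code polynomial of the code R(r,m)*. -/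
/-- The binary digit sum (number of ones in the binary expansion). -/
def wt2 (h : ℕ) : ℕ := (Nat.digits 2 h).sum

lemma wt2_step (a : ℕ) : wt2 a = a % 2 + wt2 (a / 2) := by
  rcases Nat.eq_zero_or_pos a with rfl | ha
  · simp [wt2]
  · rw [wt2, Nat.digits_def' (by norm_num : 1 < 2) ha]
    simp [wt2, List.sum_cons]

lemma wt2_zero : wt2 0 = 0 := by simp [wt2]

lemma wt2_one : wt2 1 = 1 := by rw [wt2_step]; norm_num [wt2_zero]

lemma wt2_add_le' : ∀ N a b : ℕ, a + b ≤ N → wt2 (a + b) ≤ wt2 a + wt2 b := by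
  intro N
  induction N with
  | zero =>
    intro a b hab
    have ha : a = 0 := by omega
    have hb : b = 0 := by omega
    subst ha; subst hb; simp [wt2_zero]
  | succ N ih =>
    intro a b hab
    rcases Nat.eq_zero_or_pos (a + b) with h0 | hpos
    · have : a = 0 := by omega
      have : b = 0 := by omega
      simp_all
    by_cases hodd : a % 2 = 1 ∧ b % 2 = 1
    · have h1 : (a + b) % 2 = 0 := by omega
      have h2 : (a + b) / 2 = a / 2 + b / 2 + 1 := by omega
      rw [wt2_step (a + b), h1, h2, wt2_step a, wt2_step b]
      have i1 : wt2 (a / 2 + b / 2 + 1) ≤ wt2 (a / 2 + b / 2) + wt2 1 :=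
        ih _ _ (by omega)
      have i2 : wt2 (a / 2 + b / 2) ≤ wt2 (a / 2) + wt2 (b / 2) := ih _ _ (by omega)
      rw [wt2_one] at i1
      omega
    · have h1 : (a + b) % 2 = a % 2 + b % 2 := by omega
      have h2 : (a + b) / 2 = a / 2 + b / 2 := by omega
      rw [wt2_step (a + b), h1, h2, wt2_step a, wt2_step b]
      have i2 : wt2 (a / 2 + b / 2) ≤ wt2 (a / 2) + wt2 (b / 2) := ih _ _ (by omega)
      omega

lemma wt2_add_le (a b : ℕ) : wt2 (a + b) ≤ wt2 a + wt2 b := wt2_add_le' (a + b) a b le_rfl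

lemma wt2_two_pow (k : ℕ) : wt2 (2 ^ k) = 1 := by
  induction k with
  | zero => simpa using wt2_one
  | succ k ih =>
    rw [wt2_step]
    have h1 : 2 ^ (k + 1) % 2 = 0 := by
      rw [pow_succ]; omega
    have h2 : 2 ^ (k + 1) / 2 = 2 ^ k := by
      rw [pow_succ]; omega
    rw [h1, h2, ih]

lemma wt2_pred_pow (m : ℕ) : wt2 (2 ^ m - 1) = m := by
  induction m with
  | zero => simpa using wt2_zero
  | succ m ih =>
    have hP : 1 ≤ 2 ^ m := Nat.one_le_two_pow
    have e : 2 ^ (m+1) = 2 * 2 ^ m := by ring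
    rw [wt2_step]
    have h1 : (2 ^ (m+1) - 1) % 2 = 1 := by omega
    have h2 : (2 ^ (m+1) - 1) / 2 = 2 ^ m - 1 := by omega
    rw [h1, h2, ih]; omega

lemma wt2_mul_pow_add : ∀ (m q s : ℕ), s < 2 ^ m → wt2 (q * 2 ^ m + s) = wt2 q + wt2 s := by
  intro m
  induction m with
  | zero => intro q s hs; interval_cases s; simp [wt2_zero]
  | succ m ih =>
    intro q s hs
    have e : q * 2 ^ (m + 1) = 2 * (q * 2 ^ m) := by ring
    rw [wt2_step (q * 2 ^ (m+1) + s)]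
    have h1 : (q * 2 ^ (m+1) + s) % 2 = s % 2 := by omega
    have h2 : (q * 2 ^ (m+1) + s) / 2 = q * 2 ^ m + s / 2 := by omega
    rw [h1, h2, ih q (s / 2) (by omega), wt2_step s]
    omega

lemma wt2_ge_of_dvd (m : ℕ) (hm : 1 ≤ m) :
    ∀ N : ℕ, 0 < N → (2 ^ m - 1) ∣ N → m ≤ wt2 N := by
  intro N
  induction N using Nat.strong_induction_on with
  | _ N ih =>
    intro hN hdvd
    have hP : 2 ≤ 2 ^ m := by
      calc 2 = 2 ^ 1 := by norm_num
      _ ≤ 2 ^ m := Nat.pow_le_pow_right (by norm_num) hm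
    by_cases hlt : N < 2 ^ m
    · have hle : 2 ^ m - 1 ≤ N := Nat.le_of_dvd hN hdvd
      have : N = 2 ^ m - 1 := by omega
      rw [this, wt2_pred_pow]
    · push_neg at hlt
      set q := N / 2 ^ m with hq
      set s := N % 2 ^ m with hs
      have hqs : N = q * 2 ^ m + s := (Nat.div_add_mod' N (2 ^ m)).symm
      have hq1 : 1 ≤ q := by
        rw [hq]; exact Nat.one_le_div_iff (by omega) |>.mpr hlt
      have hslt : s < 2 ^ m := Nat.mod_lt _ (by omega)
      have e1 : q * (2 ^ m - 1) + q = q * 2 ^ m := by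
        have h1 : 2 ^ m - 1 + 1 = 2 ^ m := by omega
        calc q * (2 ^ m - 1) + q = q * ((2 ^ m - 1) + 1) := by ring
          _ = q * 2 ^ m := by rw [h1]
      have hdvd' : (2 ^ m - 1) ∣ (q + s) := by
        have h2 : (2 ^ m - 1) ∣ q * (2 ^ m - 1) := Dvd.intro_left q rfl
        have h3 : q + s = N - q * (2 ^ m - 1) := by
          rw [hqs, ← e1, add_assoc, Nat.add_sub_cancel_left]
        rw [h3]; exact Nat.dvd_sub hdvd h2
      have h2q : 2 * q ≤ q * 2 ^ m := by
        calc 2 * q = q * 2 := by ring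
          _ ≤ q * 2 ^ m := Nat.mul_le_mul_left q hP
      have h4 : q + s < N := by omega
      have h5 : m ≤ wt2 (q + s) := ih (q + s) h4 (by omega) hdvd'
      have h6 : wt2 (q + s) ≤ wt2 q + wt2 s := wt2_add_le q s
      have h7 : wt2 N = wt2 q + wt2 s := by
        rw [hqs]; exact wt2_mul_pow_add m q s hslt
      omega


open Polynomial

variable {m : ℕ}

lemma exists_linearized (m : ℕ) (hm : m ≠ 0)
    (L : GaloisField 2 m →ₗ[ZMod 2] GaloisField 2 m) :
    ∃ c : Fin m → GaloisField 2 m,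
      ∀ x, L x = ∑ k : Fin m, c k * x ^ (2 ^ (k : ℕ)) := by
  classical
  set K := GaloisField 2 m with hK
  haveI : Fintype K := Fintype.ofFinite K
  have hcardK : Fintype.card K = 2 ^ m := by
    rw [← Nat.card_eq_fintype_card]; exact GaloisField.card 2 m hm
  -- the candidate map
  have hlin : ∀ (c : Fin m → K) (x y : K),
      (∑ k : Fin m, c k * (x + y) ^ (2 ^ (k : ℕ)))
        = (∑ k : Fin m, c k * x ^ (2 ^ (k : ℕ))) + ∑ k : Fin m, c k * y ^ (2 ^ (k : ℕ)) := by
    intro c x y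
    rw [← Finset.sum_add_distrib]
    refine Finset.sum_congr rfl fun k _ => ?_
    rw [add_pow_char_pow, mul_add]
  let ψ : (Fin m → K) → (K →ₗ[ZMod 2] K) := fun c =>
    { toFun := fun x => ∑ k : Fin m, c k * x ^ (2 ^ (k : ℕ))
      map_add' := fun x y => hlin c x y
      map_smul' := by
        intro a x
        fin_cases a
        · change ∑ k : Fin m, c k * ((0 : ZMod 2) • x) ^ (2 ^ (k : ℕ)) = (0 : ZMod 2) • ∑ k : Fin m, c k * x ^ (2 ^ (k : ℕ))
          simp
        · change ∑ k : Fin m, c k * ((1 : ZMod 2) • x) ^ (2 ^ (k : ℕ)) = (1 : ZMod 2) • ∑ k : Fin m, c k * x ^ (2 ^ (k : ℕ))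
          simp }
  -- injectivity
  have hinj : Function.Injective ψ := by
    intro c c' hcc
    have hx : ∀ x : K, ∑ k : Fin m, (c k - c' k) * x ^ (2 ^ (k : ℕ)) = 0 := by
      intro x
      have := DFunLike.congr_fun hcc x
      simp only [ψ, LinearMap.coe_mk, AddHom.coe_mk] at this
      simp [sub_mul, Finset.sum_sub_distrib, this]
    set P : K[X] := ∑ k : Fin m, C (c k - c' k) * X ^ (2 ^ (k : ℕ)) with hP
    have heval : ∀ x : K, P.eval x = 0 := by
      intro x
      rw [hP]
      simp only [eval_finset_sum, eval_mul, eval_C, eval_pow, eval_X]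
      exact hx x
    have hdeg : P.natDegree < Fintype.card K := by
      rw [hcardK]
      refine lt_of_le_of_lt (natDegree_sum_le_of_forall_le _ _ fun k _ => ?_)
        (show 2 ^ (m - 1) < 2 ^ m from Nat.pow_lt_pow_right (by norm_num) (by omega))
      refine le_trans (natDegree_C_mul_le _ _) ?_
      rw [natDegree_X_pow]
      exact Nat.pow_le_pow_right (by norm_num) (by omega)
    have hP0 : P = 0 :=
      Polynomial.eq_zero_of_natDegree_lt_card_of_eval_eq_zero P Function.injective_id
        (fun x => heval x) (by simpa using hdeg)
    funext j
    have hcoeff : P.coeff (2 ^ (j : ℕ)) = c j - c' j := by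
      rw [hP, Polynomial.finset_sum_coeff]
      rw [Finset.sum_eq_single j]
      · simp [sub_mul, coeff_C_mul, coeff_X_pow]
      · intro k _ hkj
        rw [coeff_C_mul, coeff_X_pow, if_neg, mul_zero]
        intro hpow
        exact hkj (Fin.ext (Nat.pow_right_injective le_rfl hpow.symm))
      · simp
    rw [hP0] at hcoeff
    simp only [Polynomial.coeff_zero] at hcoeff
    have := hcoeff.symm
    rwa [sub_eq_zero] at this
  -- cardinality
  haveI : Fintype (K →ₗ[ZMod 2] K) :=
    Fintype.ofInjective (fun (L : K →ₗ[ZMod 2] K) => (L : K → K)) DFunLike.coe_injective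
  have hfr : Module.finrank (ZMod 2) K = m := GaloisField.finrank 2 hm
  let b : Module.Basis (Fin m) (ZMod 2) K :=
    (Module.finBasis (ZMod 2) K).reindex (finCongr hfr)
  have hcard : Fintype.card (Fin m → K) = Fintype.card (K →ₗ[ZMod 2] K) :=
    Fintype.card_congr (b.constr (ZMod 2) (M' := K)).toEquiv
  have hbij : Function.Bijective ψ :=
    (Fintype.bijective_iff_injective_and_card ψ).mpr ⟨hinj, hcard⟩
  obtain ⟨c, hc⟩ := hbij.2 L
  exact ⟨c, fun x => by rw [← hc]; rfl⟩


open Polynomial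

/-! ### Helper: the span of power functions with small binary weight -/

noncomputable def Vspan (m r : ℕ) :
    Submodule (GaloisField 2 m) (GaloisField 2 m → GaloisField 2 m) :=
  Submodule.span (GaloisField 2 m)
    ((fun e => fun x : GaloisField 2 m => x ^ e) '' {e : ℕ | wt2 e ≤ r})

lemma Vspan_mono (m : ℕ) {a b : ℕ} (hab : a ≤ b) : Vspan m a ≤ Vspan m b :=
  Submodule.span_mono (Set.image_mono fun e he => le_trans he hab)

lemma pow_mem_Vspan (m r e : ℕ) (he : wt2 e ≤ r) :
    (fun x : GaloisField 2 m => x ^ e) ∈ Vspan m r :=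
  Submodule.subset_span ⟨e, he, rfl⟩

lemma one_mem_Vspan (m r : ℕ) : (fun _ : GaloisField 2 m => (1 : GaloisField 2 m)) ∈ Vspan m r := by
  have := pow_mem_Vspan m r 0 (by simp [wt2_zero])
  simpa [pow_zero] using this

lemma mul_mem_Vspan (m : ℕ) {a b : ℕ} {g g' : GaloisField 2 m → GaloisField 2 m}
    (hg : g ∈ Vspan m a) (hg' : g' ∈ Vspan m b) : g * g' ∈ Vspan m (a + b) := by
  unfold Vspan at hg hg' ⊢
  induction hg using Submodule.span_induction with
  | mem u hu =>
    induction hg' using Submodule.span_induction with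
    | mem v hv =>
      obtain ⟨e, he, rfl⟩ := hu
      obtain ⟨e', he', rfl⟩ := hv
      have heq : ((fun x : GaloisField 2 m => x ^ e) * fun x => x ^ e')
          = fun x : GaloisField 2 m => x ^ (e + e') := by
        funext x; simp [pow_add]
      rw [heq]
      exact Submodule.subset_span
        ⟨e + e', le_trans (wt2_add_le e e') (add_le_add he he'), rfl⟩
    | zero => rw [mul_zero]; exact zero_mem _
    | add v w hv hw ihv ihw => rw [mul_add]; exact add_mem ihv ihw
    | smul c v hv ihv => rw [mul_smul_comm]; exact Submodule.smul_mem _ _ ihv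
  | zero => rw [zero_mul]; exact zero_mem _
  | add u w hu hw ihu ihw => rw [add_mul]; exact add_mem ihu ihw
  | smul c u hu ihu => rw [smul_mul_assoc]; exact Submodule.smul_mem _ _ ihu

lemma prod_mem_Vspan (m : ℕ) (ℓ : Fin m → (GaloisField 2 m → GaloisField 2 m))
    (hℓ : ∀ j, ℓ j ∈ Vspan m 1) (d : Fin m → ℕ) (hd : ∀ j, d j ≤ 1) (t : Finset (Fin m)) :
    (fun x => ∏ j ∈ t, (ℓ j x) ^ (d j)) ∈ Vspan m (∑ j ∈ t, d j) := by
  classical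
  induction t using Finset.induction_on with
  | empty => simpa using one_mem_Vspan m 0
  | @insert a s ha ih =>
    rw [Finset.sum_insert ha]
    have heq : (fun x => ∏ j ∈ insert a s, (ℓ j x) ^ (d j))
        = (fun x => (ℓ a x) ^ (d a)) * fun x => ∏ j ∈ s, (ℓ j x) ^ (d j) := by
      funext x; simp [Finset.prod_insert ha]
    rw [heq]
    refine mul_mem_Vspan m ?_ ih
    rcases Nat.le_one_iff_eq_zero_or_eq_one.mp (hd a) with h0 | h1
    · rw [h0]; simpa [pow_zero] using one_mem_Vspan m 0
    · rw [h1]; simpa [pow_one] using hℓ a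

/-- Let `n = 2^m − 1`, `α` primitive in `F_{2^m}`, `0 ≤ r ≤ m−1`.  For every
multilinear `f` of degree `≤ r` and every integer `h` with
`1 ≤ wt₂(h) ≤ m − r − 1`, `α^h` is a root of the code polynomial of `R(r,m)*`
coming from `f`:  `∑_{i<n} ι(f(coords α^i)) · α^{h·i} = 0`. -/
theorem punctured_RM_code_roots (m r n : ℕ) (hm : 1 ≤ m) (hr : r < m)
    (hn : n = 2 ^ m - 1)
    (α : GaloisField 2 m) (hα : orderOf α = n)
    (coords : GaloisField 2 m → Fin m → ZMod 2)
    (hcoords : ∀ x : GaloisField 2 m,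
      ∑ i : Fin m, algebraMap (ZMod 2) (GaloisField 2 m) (coords x i) * α ^ (i : ℕ) = x)
    (f : MvPolynomial (Fin m) (ZMod 2)) (hf : IsMultilinear f)
    (hfr : f.totalDegree ≤ r)
    (h : ℕ) (h1 : 1 ≤ wt2 h) (h2 : wt2 h ≤ m - r - 1) :
    ∑ i ∈ Finset.range n,
        algebraMap (ZMod 2) (GaloisField 2 m)
          (MvPolynomial.eval (coords (α ^ i)) f) * α ^ (h * i) = 0 := by
  classical
  let ι : ZMod 2 →+* (GaloisField 2 m) := algebraMap (ZMod 2) (GaloisField 2 m)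
  haveI : Fintype (GaloisField 2 m) := Fintype.ofFinite (GaloisField 2 m)
  have hm0 : m ≠ 0 := by omega
  have hcardK : Fintype.card (GaloisField 2 m) = 2 ^ m := by
    rw [← Nat.card_eq_fintype_card]; exact GaloisField.card 2 m hm0
  have hαn : α ^ n = 1 := by rw [← hα]; exact pow_orderOf_eq_one α
  -- `coords` is additive
  let T : (Fin m → ZMod 2) → (GaloisField 2 m) := fun v => ∑ i : Fin m, ι (v i) * α ^ (i : ℕ)
  have hTco : ∀ z : GaloisField 2 m, T (coords z) = z := fun z => hcoords z
  have hTsurj : Function.Surjective T := fun x => ⟨coords x, hTco x⟩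
  have hcardT : Fintype.card (Fin m → ZMod 2) = Fintype.card (GaloisField 2 m) := by
    rw [hcardK, Fintype.card_fun]
    simp
  have hTbij : Function.Bijective T :=
    (Fintype.bijective_iff_surjective_and_card T).mpr ⟨hTsurj, hcardT⟩
  have hTinj := hTbij.1
  have hTadd : ∀ u v, T (u + v) = T u + T v := by
    intro u v
    simp only [T, Pi.add_apply, map_add, add_mul]
    rw [Finset.sum_add_distrib]
  have coords_add : ∀ x y : (GaloisField 2 m), coords (x + y) = coords x + coords y := by
    intro x y
    apply hTinj
    rw [hTadd, hTco, hTco, hTco]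
  have coords_zero : coords 0 = 0 := by
    apply hTinj
    rw [hTco 0]
    simp [T]
  -- each coordinate functional, as a linear map `(GaloisField 2 m) → (GaloisField 2 m)`
  let L : Fin m → ((GaloisField 2 m) →ₗ[ZMod 2] (GaloisField 2 m)) := fun j =>
    { toFun := fun x => ι (coords x j)
      map_add' := by
        intro x y
        show ι (coords (x + y) j) = ι (coords x j) + ι (coords y j)
        rw [coords_add x y]
        simp
      map_smul' := by
        intro a x
        fin_cases a
        · show ι (coords ((0 : ZMod 2) • x) j) = (0 : ZMod 2) • ι (coords x j)
          rw [zero_smul, zero_smul, coords_zero]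
          simp
        · show ι (coords ((1 : ZMod 2) • x) j) = (1 : ZMod 2) • ι (coords x j)
          rw [one_smul, one_smul] }
  choose c hc using fun j => exists_linearized m hm0 (L j)
  have hLmem : ∀ j : Fin m, (fun x : (GaloisField 2 m) => ι (coords x j)) ∈ Vspan m 1 := by
    intro j
    have heq : (fun x : (GaloisField 2 m) => ι (coords x j))
        = ∑ k : Fin m, (c j k • fun x : (GaloisField 2 m) => x ^ (2 ^ (k : ℕ))) := by
      funext x
      rw [show ι (coords x j) = L j x from rfl, hc j x]
      simp [Finset.sum_apply, smul_eq_mul]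
    rw [heq]
    exact Submodule.sum_mem _ fun k _ =>
      Submodule.smul_mem _ _ (pow_mem_Vspan m 1 (2 ^ (k : ℕ)) (by rw [wt2_two_pow]))
  -- the code function lies in `Vspan m r`
  have hfe : ∀ x : (GaloisField 2 m), ι (MvPolynomial.eval (coords x) f)
      = ∑ d ∈ f.support, ι (f.coeff d) * ∏ j : Fin m, (ι (coords x j)) ^ (d j) := by
    intro x
    rw [MvPolynomial.eval_eq', map_sum]
    refine Finset.sum_congr rfl fun d _ => ?_
    rw [map_mul, map_prod]
    simp [map_pow]
  have hgf : (fun x : (GaloisField 2 m) => ι (MvPolynomial.eval (coords x) f)) ∈ Vspan m r := by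
    have heq : (fun x : (GaloisField 2 m) => ι (MvPolynomial.eval (coords x) f))
        = ∑ d ∈ f.support,
            (ι (f.coeff d) • fun x : (GaloisField 2 m) => ∏ j : Fin m, (ι (coords x j)) ^ (d j)) := by
      funext x
      rw [hfe x]
      simp [Finset.sum_apply, smul_eq_mul]
    rw [heq]
    refine Submodule.sum_mem _ fun d hd => Submodule.smul_mem _ _ ?_
    have hmem := prod_mem_Vspan m (fun j => fun x : (GaloisField 2 m) => ι (coords x j)) hLmem
      (fun j => d j) (fun j => hf d hd j) Finset.univ
    refine Vspan_mono m ?_ hmem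
    have hsum : (∑ j : Fin m, d j) = d.sum fun _ e => e :=
      (Finsupp.sum_fintype d (fun _ e => e) (fun _ => rfl)).symm
    rw [hsum]
    exact le_trans (MvPolynomial.le_totalDegree hd) hfr
  -- every element of `Vspan m r` gives a vanishing sum
  have hzero : ∀ g ∈ Vspan m r, ∑ i ∈ Finset.range n, g (α ^ i) * α ^ (h * i) = 0 := by
    intro g hg
    unfold Vspan at hg
    induction hg using Submodule.span_induction with
    | mem u hu =>
      obtain ⟨e, he, rfl⟩ := hu
      simp only [Set.mem_setOf_eq] at he
      have hterm : ∀ i, (α ^ i) ^ e * α ^ (h * i) = (α ^ (e + h)) ^ i := by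
        intro i
        rw [← pow_mul, ← pow_add, show i * e + h * i = (e + h) * i by ring, pow_mul]
      have goal_eq : (∑ i ∈ Finset.range n, (fun x : (GaloisField 2 m) => x ^ e) (α ^ i) * α ^ (h * i))
          = ∑ i ∈ Finset.range n, (α ^ (e + h)) ^ i :=
        Finset.sum_congr rfl fun i _ => hterm i
      rw [goal_eq]
      have hh1 : 1 ≤ h := by
        by_contra hcon
        push_neg at hcon
        interval_cases h
        rw [wt2_zero] at h1
        omega
      have hγ1 : α ^ (e + h) ≠ 1 := by
        intro hcon
        have hdvd : n ∣ (e + h) := hα ▸ orderOf_dvd_of_pow_eq_one hcon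
        have hmle : m ≤ wt2 (e + h) :=
          wt2_ge_of_dvd m hm (e + h) (by omega) (by rwa [← hn])
        have hle2 : wt2 (e + h) ≤ wt2 e + wt2 h := wt2_add_le e h
        omega
      have hγn : (α ^ (e + h)) ^ n = 1 := by
        rw [← pow_mul, mul_comm, pow_mul, hαn, one_pow]
      rw [geom_sum_eq hγ1, hγn, sub_self, zero_div]
    | zero => simp
    | add u v hu hv ihu ihv =>
      simp only [Pi.add_apply, add_mul]
      rw [Finset.sum_add_distrib, ihu, ihv, add_zero]
    | smul a u hu ihu =>
      simp only [Pi.smul_apply, smul_eq_mul, mul_assoc]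
      rw [← Finset.mul_sum, ihu, mul_zero]
  exact hzero _ hgf
end

section
/- Let k < n, let G_R ∈ F_2^{k×(n−k)}, and let C = { (u·G_R, u) : u ∈ F_2^k } ⊆ F_2^n be the systematic linear code with generator matrix (G_R | I_k), where the last k coordinates are the systematic positions. Let c ∈ C, let e = (e_red, e_sys) ∈ F_2^{n−k} × F_2^k be an error, and let r̄ = c + e. Define c_w = (r̄_sys·G_R, r̄_sys) ∈ C, where r̄_sys is the systematic part of r̄, and set r = r̄ + c_w. Suppose B ⊆ {1,…,k} with |B| = μ contains the support of e_sys, G ⊆ {1,…,n−k} with |G| = μ satisfies e_red|_G = 0, and the μ×μ submatrix D of G_R formed by the rows indexed by B and columns indexed by G is invertible. Then e_sys|_B = r|_G · D^{−1}, where r|_G denotes the restriction of the redundancy part of r to the columns G; together with e_sys being zero outside B, this determines e_sys, and hence c, completely (correctness of redundancy set decoding). -/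
/-- **Correctness of redundancy set decoding.**  Let `C = {(u·G_R, u)}` be the
systematic code with generator matrix `(G_R | I_k)`.  A codeword determined by
`u` is corrupted by an error `e = (e_red, e_sys)`, giving
`r̄ = (u·G_R + e_red, u + e_sys)`.  Re-encoding the systematic part of `r̄`
yields `c_w = ((u+e_sys)·G_R, u+e_sys)` and `r = r̄ + c_w`, whose systematic
part is zero.  If `B` (enumerated by the injection `β`, `|B| = μ`) contains the
support of `e_sys`, the positions `G` (enumerated by the injection `γ`) carry
no redundancy errors (`e_red|_G = 0`), and the `μ×μ` submatrix
`D = G_R[B, G]` is invertible, then `e_sys|_B = r|_G · D⁻¹`, which (together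
with `e_sys` vanishing outside `B`) determines `e_sys` and hence the codeword
completely. -/
theorem redundancy_set_decoding_correct (n k μ : ℕ) (hk : k < n)
    (GR : Matrix (Fin k) (Fin (n - k)) (ZMod 2))
    (u : Fin k → ZMod 2)
    (ered : Fin (n - k) → ZMod 2) (esys : Fin k → ZMod 2)
    (β : Fin μ → Fin k) (hβ : Function.Injective β)
    (γ : Fin μ → Fin (n - k)) (hγ : Function.Injective γ)
    (hsupp : ∀ i : Fin k, esys i ≠ 0 → ∃ t, β t = i)
    (hered : ∀ t, ered (γ t) = 0)
    (hD : IsUnit (GR.submatrix β γ).det) :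
    ∀ t : Fin μ, esys (β t) =
      Matrix.vecMul
        (fun s => (Matrix.vecMul u GR + ered + Matrix.vecMul (u + esys) GR) (γ s))
        (GR.submatrix β γ)⁻¹ t := by
  intro t
  have hfun : (fun s => (Matrix.vecMul u GR + ered + Matrix.vecMul (u + esys) GR) (γ s)) =
      Matrix.vecMul (fun t => esys (β t)) (GR.submatrix β γ) := by
    funext s
    simp only [Pi.add_apply, Matrix.vecMul, dotProduct, Matrix.submatrix_apply,
      hered s, add_zero]
    rw [← Finset.sum_add_distrib]
    have h1 : ∀ i : Fin k, u i * GR i (γ s) + (u i + esys i) * GR i (γ s)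
        = esys i * GR i (γ s) := by
      intro i
      have h0 : u i + u i = 0 := CharTwo.add_self_eq_zero _
      rw [add_mul, ← add_assoc, ← add_mul, h0, zero_mul, zero_add]
    rw [Finset.sum_congr rfl (fun i _ => h1 i)]
    refine Eq.trans ?_ (Finset.sum_image (f := fun i => esys i * GR i (γ s)) (g := β)
      (fun x _ y _ h => hβ h))
    refine (Finset.sum_subset (Finset.subset_univ _) ?_).symm
    intro i _ hi
    by_cases h : esys i = 0
    · simp [h]
    · obtain ⟨t, ht⟩ := hsupp i h
      exact absurd (Finset.mem_image.2 ⟨t, Finset.mem_univ _, ht⟩) hi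
  rw [hfun, Matrix.vecMul_vecMul, Matrix.mul_nonsing_inv _ hD, Matrix.vecMul_one]
end
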